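/- Equivalence of finite-dimensional Stinespring dilations: let H, K, E, E' be finite-dimensional complex Hilbert spaces with dim E ≤ dim E', and let V : H → K ⊗ E and V' : H → K ⊗ E' be isometries that dilate the same quantum channel, i.e. Tr_E(V ρ V†) = Tr_{E'}(V' ρ (V')†) for every linear operator ρ on H (where Tr_E and Tr_{E'} denote the partial traces over E and E'). Then there exists a partial isometry W : E → E' such that (𝟙_K ⊗ W) V = V'. -/
import Mathlib

open Matrix Kronecker
open scoped BigOperators

lemma range_mul_conjTranspose_self {n m : Type} [Fintype n] [Fintype m] (A : Matrix n m ℂ) :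
    LinearMap.range (A * Aᴴ).mulVecLin = LinearMap.range A.mulVecLin := by
  open ComplexOrder in
  apply Submodule.eq_of_le_of_finrank_eq
  · rw [Matrix.mulVecLin_mul]
    exact LinearMap.range_comp_le_range _ _
  · exact Matrix.rank_self_mul_conjTranspose A

lemma exists_mul_eq {n m k : Type} [Fintype n] [Fintype m] [Fintype k] [DecidableEq k]
    (A : Matrix n m ℂ) (B : Matrix n k ℂ)
    (h : LinearMap.range B.mulVecLin ≤ LinearMap.range A.mulVecLin) :
    ∃ C : Matrix m k ℂ, A * C = B := by
  have hc : ∀ j : k, ∃ c : m → ℂ, A *ᵥ c = B *ᵥ Pi.single j 1 := by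
    intro j
    exact h (LinearMap.mem_range_self _ _)
  choose c hc using hc
  refine ⟨Matrix.of (fun i j => c j i), ?_⟩
  ext i j
  have := congrFun (hc j) i
  simpa [Matrix.mul_apply, Matrix.mulVec, dotProduct, Pi.single_apply,
    Finset.sum_ite_eq', mul_ite] using this

lemma sandwich {α H : Type} [Fintype α] [Fintype H] [DecidableEq H]
    (A : Matrix α H ℂ) (h h' : H) (i j : α) :
    (A * Matrix.single h h' (1:ℂ) * Aᴴ) i j = A i h * star (A j h') := by
  simp [Matrix.mul_apply, Matrix.single, Matrix.conjTranspose_apply, ite_and,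
    ite_mul, mul_ite, zero_mul, mul_zero, Finset.sum_ite_eq, Finset.sum_ite_eq']

/-- **Equivalence of finite-dimensional Stinespring dilations:** let `H, K, E, E'` be
finite-dimensional complex Hilbert spaces (realized as `ℂ^H, ℂ^K, ℂ^E, ℂ^{E'}` for finite
index types) with `dim E ≤ dim E'`, and let `V : H → K ⊗ E` and `V' : H → K ⊗ E'` be
isometries (`V†V = 𝟙`, `V'†V' = 𝟙`) dilating the same quantum channel, i.e.
`Tr_E(V ρ V†) = Tr_{E'}(V' ρ V'†)` for every operator `ρ` on `H` (partial traces stated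
entrywise). Then there is a partial isometry `W : E → E'` (i.e. `W†W` is an orthogonal
projection) with `(𝟙_K ⊗ W) V = V'`. -/
theorem stinespring_dilations_equivalent
    (H K E E' : Type) [Fintype H] [DecidableEq H] [Fintype K] [DecidableEq K]
    [Fintype E] [DecidableEq E] [Fintype E'] [DecidableEq E']
    (hdim : Fintype.card E ≤ Fintype.card E')
    (V : Matrix (K × E) H ℂ) (V' : Matrix (K × E') H ℂ)
    (hV : Vᴴ * V = 1) (hV' : V'ᴴ * V' = 1)
    (hchan : ∀ ρ : Matrix H H ℂ, ∀ kk kk' : K,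
      ∑ e : E, (V * ρ * Vᴴ) (kk, e) (kk', e) = ∑ e' : E', (V' * ρ * V'ᴴ) (kk, e') (kk', e')) :
    ∃ W : Matrix E' E ℂ,
      (Wᴴ * W)ᴴ = Wᴴ * W ∧ (Wᴴ * W) * (Wᴴ * W) = Wᴴ * W ∧
      ((1 : Matrix K K ℂ) ⊗ₖ W) * V = V' := by
  set X : Matrix (K × H) E ℂ := Matrix.of (fun p e => V (p.1, e) p.2) with hXdef
  set Y : Matrix (K × H) E' ℂ := Matrix.of (fun p e' => V' (p.1, e') p.2) with hYdef
  have hXY : X * Xᴴ = Y * Yᴴ := by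
    ext ⟨k, h⟩ ⟨k', h'⟩
    have := hchan (Matrix.single h h' 1) k k'
    simp only [sandwich] at this
    simpa [Matrix.mul_apply, Matrix.conjTranspose_apply, hXdef, hYdef] using this
  have hYr : LinearMap.range Y.mulVecLin ≤ LinearMap.range (X * Xᴴ).mulVecLin := by
    rw [hXY, range_mul_conjTranspose_self]
  have hXr : LinearMap.range X.mulVecLin ≤ LinearMap.range (X * Xᴴ).mulVecLin := by
    rw [range_mul_conjTranspose_self]
  obtain ⟨U, hU⟩ := exists_mul_eq (X * Xᴴ) Y hYr
  obtain ⟨C, hC⟩ := exists_mul_eq (X * Xᴴ) X hXr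
  set M : Matrix E E' ℂ := Xᴴ * U with hMdef
  have hYH : Uᴴ * (X * Xᴴ) = Yᴴ := by
    rw [← hU, Matrix.conjTranspose_mul, Matrix.conjTranspose_mul,
      Matrix.conjTranspose_conjTranspose, ← Matrix.mul_assoc]
  have hAUA : (X * Xᴴ) * (U * Uᴴ) * (X * Xᴴ) = X * Xᴴ := by
    calc (X * Xᴴ) * (U * Uᴴ) * (X * Xᴴ)
        = ((X * Xᴴ) * U) * (Uᴴ * (X * Xᴴ)) := by simp only [Matrix.mul_assoc]
      _ = Y * Yᴴ := by rw [hU, hYH]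
      _ = X * Xᴴ := hXY.symm
  have hXUX : (X * Xᴴ) * (U * Uᴴ) * X = X := by
    have h1 : (X * Xᴴ) * (U * Uᴴ) * X = (X * Xᴴ) * (U * Uᴴ) * ((X * Xᴴ) * C) := by rw [hC]
    calc (X * Xᴴ) * (U * Uᴴ) * X
        = (X * Xᴴ) * (U * Uᴴ) * ((X * Xᴴ) * C) := h1
      _ = ((X * Xᴴ) * (U * Uᴴ) * (X * Xᴴ)) * C := by simp only [Matrix.mul_assoc]
      _ = (X * Xᴴ) * C := by rw [hAUA]
      _ = X := hC
  have hP : Xᴴ * (U * Uᴴ) * (X * Xᴴ) = Xᴴ := by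
    have := congrArg Matrix.conjTranspose hXUX
    simpa only [Matrix.conjTranspose_mul, Matrix.conjTranspose_conjTranspose,
      Matrix.mul_assoc] using this
  have hMH : Mᴴ = Uᴴ * X := by
    rw [hMdef, Matrix.conjTranspose_mul, Matrix.conjTranspose_conjTranspose]
  have hMMM : M * Mᴴ * M = M := by
    rw [hMH, hMdef]
    calc (Xᴴ * U) * (Uᴴ * X) * (Xᴴ * U)
        = (Xᴴ * (U * Uᴴ) * (X * Xᴴ)) * U := by simp only [Matrix.mul_assoc]
      _ = Xᴴ * U := by rw [hP]
  have hPH : (M * Mᴴ)ᴴ = M * Mᴴ := by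
    rw [Matrix.conjTranspose_mul, Matrix.conjTranspose_conjTranspose]
  have hPP : (M * Mᴴ) * (M * Mᴴ) = M * Mᴴ := by
    calc (M * Mᴴ) * (M * Mᴴ) = (M * Mᴴ * M) * Mᴴ := by simp only [Matrix.mul_assoc]
      _ = M * Mᴴ := by rw [hMMM]
  have hXM : X * M = Y := by rw [hMdef, ← Matrix.mul_assoc, hU]
  have hkey : Mᵀᴴ * Mᵀ = (M * Mᴴ)ᵀ := by
    ext a b
    simp only [Matrix.mul_apply, Matrix.conjTranspose_apply, Matrix.transpose_apply]
    exact Finset.sum_congr rfl (fun j _ => mul_comm _ _)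
  refine ⟨Mᵀ, ?_, ?_, ?_⟩
  · rw [hkey]
    ext a b
    simp only [Matrix.conjTranspose_apply, Matrix.transpose_apply]
    simpa using congrFun (congrFun hPH b) a
  · rw [hkey, ← Matrix.transpose_mul, hPP]
  · ext ⟨k, e'⟩ h
    have hcol := congrFun (congrFun hXM (k, h)) e'
    simp only [Matrix.mul_apply, hXdef, hYdef, Matrix.of_apply] at hcol
    rw [Matrix.mul_apply, Fintype.sum_prod_type]
    simp only [Matrix.kroneckerMap_apply, Matrix.transpose_apply, Matrix.one_apply,
      ite_mul, one_mul, zero_mul]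
    rw [Finset.sum_eq_single_of_mem k (Finset.mem_univ k)
      (fun b _ hb => by simp [Ne.symm hb])]
    simp only [if_pos rfl]
    rw [← hcol]
    exact Finset.sum_congr rfl (fun e _ => mul_comm _ _)
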